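/- arXiv:2504.20926 — 9 statements merged into one kernel-verified Lean document; each statement's English description precedes it below -/
import Mathlib

section
/- For every privacy budget ε > 0, the sequence m₁(N) = ⌊(√(N²·e^ε + ¼(1 − e^ε)²) − (N − e^ε/2 + 1/2)) / (e^ε − 1)⌋ satisfies lim_{N→∞} m₁(N)/N = 1/(e^{ε/2} + 1). -/
open Real Filter

/-- For every privacy budget ε > 0, the extreme-point candidate count
`m₁(N) = ⌊(√(N²·e^ε + ¼(1 − e^ε)²) − (N − e^ε/2 + 1/2)) / (e^ε − 1)⌋`
satisfies `lim_{N→∞} m₁(N)/N = 1/(e^{ε/2} + 1)`. -/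
theorem brr_m1_limit (ε : ℝ) (hε : 0 < ε) :
    Tendsto (fun N : ℕ =>
        ((⌊(Real.sqrt ((N : ℝ) ^ 2 * Real.exp ε + (1 / 4) * (1 - Real.exp ε) ^ 2)
            - ((N : ℝ) - Real.exp ε / 2 + 1 / 2)) / (Real.exp ε - 1)⌋ : ℝ) / (N : ℝ)))
      atTop (nhds (1 / (Real.exp (ε / 2) + 1))) := by
  set E : ℝ := Real.exp ε with hE
  set s : ℝ := Real.exp (ε / 2) with hs
  have hs1 : 1 < s := by
    rw [hs]; exact Real.one_lt_exp_iff.2 (by linarith)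
  have hsq : s ^ 2 = E := by
    rw [hs, hE, ← Real.exp_nat_mul]
    ring_nf
  have hE1 : 1 < E := by nlinarith
  set f : ℕ → ℝ := fun N =>
    (Real.sqrt ((N : ℝ) ^ 2 * E + (1 / 4) * (1 - E) ^ 2)
      - ((N : ℝ) - E / 2 + 1 / 2)) / (E - 1) with hf
  set c : ℝ := (1 / 4) * (1 - E) ^ 2 with hc
  have hc0 : 0 ≤ c := by positivity
  have hL : (s - 1) / (E - 1) = 1 / (s + 1) := by
    rw [← hsq]
    rw [div_eq_div_iff (by nlinarith) (by linarith)]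
    ring
  -- limit of c / N^2
  have hN : Tendsto (fun N : ℕ => (N : ℝ)) atTop atTop := tendsto_natCast_atTop_atTop
  have hN2 : Tendsto (fun N : ℕ => (N : ℝ) ^ 2) atTop atTop :=
    (tendsto_pow_atTop (by norm_num)).comp hN
  have h1 : Tendsto (fun N : ℕ => c / (N : ℝ) ^ 2) atTop (nhds 0) :=
    Tendsto.const_div_atTop hN2 c
  have h2 : Tendsto (fun N : ℕ => Real.sqrt (E + c / (N : ℝ) ^ 2)) atTop (nhds s) := by
    have : Tendsto (fun N : ℕ => E + c / (N : ℝ) ^ 2) atTop (nhds (E + 0)) :=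
      tendsto_const_nhds.add h1
    have := (Real.continuous_sqrt.tendsto (E + 0)).comp this
    simpa [← hsq, Real.sqrt_sq (by positivity : (0:ℝ) ≤ s), Function.comp_def] using this
  have h3 : Tendsto (fun N : ℕ => (E / 2 - 1 / 2) / (N : ℝ)) atTop (nhds 0) :=
    Tendsto.const_div_atTop hN _
  -- limit of f N / N
  have hfN : Tendsto (fun N : ℕ => f N / (N : ℝ)) atTop (nhds (1 / (s + 1))) := by
    have hmain : Tendsto
        (fun N : ℕ => (Real.sqrt (E + c / (N : ℝ) ^ 2) - 1 + (E / 2 - 1 / 2) / (N : ℝ)) / (E - 1))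
        atTop (nhds ((s - 1 + 0) / (E - 1))) :=
      ((h2.sub tendsto_const_nhds).add h3).div tendsto_const_nhds (by linarith)
    rw [show (1:ℝ) / (s + 1) = (s - 1 + 0) / (E - 1) by rw [add_zero]; exact hL.symm]
    apply hmain.congr'
    filter_upwards [eventually_ge_atTop 1] with N hN1
    have hNpos : (0:ℝ) < (N : ℝ) := by exact_mod_cast hN1
    have hsqrt : Real.sqrt ((N : ℝ) ^ 2 * E + c) = (N : ℝ) * Real.sqrt (E + c / (N : ℝ) ^ 2) := by
      rw [show (N : ℝ) ^ 2 * E + c = (N : ℝ) ^ 2 * (E + c / (N : ℝ) ^ 2) by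
        field_simp]
      rw [Real.sqrt_mul (by positivity), Real.sqrt_sq hNpos.le]
    rw [hf]
    simp only [hsqrt]
    generalize Real.sqrt (E + c / (N : ℝ) ^ 2) = X
    field_simp
    ring
  -- squeeze
  have hlow : Tendsto (fun N : ℕ => (f N - 1) / (N : ℝ)) atTop (nhds (1 / (s + 1))) := by
    have : Tendsto (fun N : ℕ => f N / (N : ℝ) - 1 / (N : ℝ)) atTop (nhds (1 / (s + 1) - 0)) :=
      hfN.sub (Tendsto.const_div_atTop hN 1)
    rw [sub_zero] at this
    apply this.congr
    intro N; rw [sub_div]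
  refine tendsto_of_tendsto_of_tendsto_of_le_of_le' hlow hfN ?_ ?_
  · filter_upwards [eventually_ge_atTop 1] with N hN1
    have hNpos : (0:ℝ) < (N : ℝ) := by exact_mod_cast hN1
    exact div_le_div_of_nonneg_right (Int.sub_one_lt_floor (f N)).le hNpos.le
  · filter_upwards [eventually_ge_atTop 1] with N hN1
    have hNpos : (0:ℝ) < (N : ℝ) := by exact_mod_cast hN1
    exact div_le_div_of_nonneg_right (Int.floor_le (f N)) hNpos.le
end

section
/- For every real ε ≥ 1 and every integer N ≥ 2, the inequality √(N²·e^ε + ¼(1 − e^ε)²) − (N − e^ε/2 + 1/2) < √(e^ε·(N² − 1) + 1) − (N − e^ε + 1) holds; consequently, dividing both sides by e^ε − 1 > 0, the right root i₁ᵣ of the extreme-point quadratic z₁(i) = ((e^ε−1)/2)i² + (N − e^ε/2 + 1/2)i − N²/2 − N/2 is strictly smaller than the right root i₃ᵣ of the odd-N middle-point quadratic z₃(i) = ((e^ε−1)/4)i² + ((N − e^ε + 1)/2)i + ((e^ε−1) − 2N − N² + 1)/4. -/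
open Real

/-- For ε ≥ 1 and integer N ≥ 2, the numerator of the right root of the extreme-point
quadratic is strictly smaller than that of the odd-N middle-point quadratic; dividing
by `e^ε − 1 > 0`, the right root `i₁ᵣ` is strictly smaller than the right root `i₃ᵣ`. -/
theorem brr_extreme_root_lt_middle_root (ε : ℝ) (hε : 1 ≤ ε) (N : ℕ) (hN : 2 ≤ N) :
    (Real.sqrt ((N : ℝ) ^ 2 * Real.exp ε + (1 / 4) * (1 - Real.exp ε) ^ 2)
        - ((N : ℝ) - Real.exp ε / 2 + 1 / 2)
      < Real.sqrt (Real.exp ε * ((N : ℝ) ^ 2 - 1) + 1) - ((N : ℝ) - Real.exp ε + 1)) ∧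
    ((Real.sqrt ((N : ℝ) ^ 2 * Real.exp ε + (1 / 4) * (1 - Real.exp ε) ^ 2)
        - ((N : ℝ) - Real.exp ε / 2 + 1 / 2)) / (Real.exp ε - 1)
      < (Real.sqrt (Real.exp ε * ((N : ℝ) ^ 2 - 1) + 1) - ((N : ℝ) - Real.exp ε + 1))
          / (Real.exp ε - 1)) := by
  set E : ℝ := Real.exp ε with hEdef
  have hE1 : 1 < E := by
    have h : Real.exp 0 < Real.exp ε := Real.exp_lt_exp.mpr (by linarith)
    rw [Real.exp_zero] at h
    exact h
  have hNR : (2 : ℝ) ≤ (N : ℝ) := by exact_mod_cast hN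
  have hprod : (0 : ℝ) < E * ((N : ℝ) ^ 2 - 1) :=
    mul_pos (by linarith) (by nlinarith)
  have hBpos : (0 : ℝ) ≤ E * ((N : ℝ) ^ 2 - 1) + 1 := by linarith
  have hB1 : (1 : ℝ) < E * ((N : ℝ) ^ 2 - 1) + 1 := by linarith
  have hsB : 1 < Real.sqrt (E * ((N : ℝ) ^ 2 - 1) + 1) := by
    refine (Real.lt_sqrt (by norm_num : (0:ℝ) ≤ 1)).mpr ?_
    rw [one_pow]
    exact hB1
  have hy : 0 < Real.sqrt (E * ((N : ℝ) ^ 2 - 1) + 1) + (E - 1) / 2 := by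
    have := Real.sqrt_nonneg (E * ((N : ℝ) ^ 2 - 1) + 1)
    linarith
  have hsq : Real.sqrt (E * ((N : ℝ) ^ 2 - 1) + 1) ^ 2 = E * ((N : ℝ) ^ 2 - 1) + 1 :=
    Real.sq_sqrt hBpos
  have key : Real.sqrt ((N : ℝ) ^ 2 * E + (1 / 4) * (1 - E) ^ 2)
      < Real.sqrt (E * ((N : ℝ) ^ 2 - 1) + 1) + (E - 1) / 2 := by
    rw [show ((E : ℝ) - 1) / 2 = (E - 1) / 2 from rfl]
    refine (Real.sqrt_lt' hy).mpr ?_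
    have expand : (Real.sqrt (E * ((N : ℝ) ^ 2 - 1) + 1) + (E - 1) / 2) ^ 2
        = (E * ((N : ℝ) ^ 2 - 1) + 1) + (E - 1) * Real.sqrt (E * ((N : ℝ) ^ 2 - 1) + 1)
          + (E - 1) ^ 2 / 4 := by rw [add_sq, hsq]; ring
    rw [expand]
    nlinarith [mul_pos (sub_pos.mpr hE1) (sub_pos.mpr hsB)]
  refine ⟨by linarith, ?_⟩
  exact div_lt_div_of_pos_right (by linarith) (by linarith)
end

section
/- Given a privacy budget ε > 0, an integer N ≥ 2, and real quality losses 0 ≤ λ₁ ≤ λ₂ ≤ ⋯ ≤ λ_N, define for 1 ≤ m ≤ N the bipartite expected error Q(m) = (e^ε·Σ_{i=1}^m λ_i + Σ_{i=m+1}^N λ_i)/(m·e^ε + N − m). If an integer m with 1 ≤ m ≤ N satisfies λ_{i+1} ≤ Q(i) for every i with 1 ≤ i < m, then Q(m) ≤ Q(1). In particular, the local expected error of the BRR mechanism with such an m is no more than the local expected error Q(1) of the GRR mechanism. -/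
open Real Finset

lemma brr_step_aux (A D c l : ℝ) (hD : 0 < D) (hc : 0 < c) (hl : l ≤ A / D) :
    (A + c * l) / (D + c) ≤ A / D := by
  rw [div_le_div_iff₀ (by linarith) hD]
  have : l * D ≤ A := (le_div_iff₀ hD).mp hl
  nlinarith

/-- If an integer `m` with `1 ≤ m ≤ N` satisfies `λ_{i+1} ≤ Q(i)` for every `1 ≤ i < m`,
then the bipartite expected error `Q(m) = (e^ε·Σ_{i≤m} λ_i + Σ_{i>m} λ_i)/(m·e^ε + N − m)`
satisfies `Q(m) ≤ Q(1)`: the BRR local expected error is no more than that of GRR. -/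
theorem brr_le_grr_local (ε : ℝ) (hε : 0 < ε) (N : ℕ) (hN : 2 ≤ N)
    (lam : ℕ → ℝ) (h0 : 0 ≤ lam 1)
    (hmono : ∀ i, 1 ≤ i → i < N → lam i ≤ lam (i + 1))
    (Q : ℕ → ℝ)
    (hQ : ∀ m, Q m =
      (Real.exp ε * ∑ i ∈ Finset.Icc 1 m, lam i + ∑ i ∈ Finset.Icc (m + 1) N, lam i)
        / (m * Real.exp ε + N - m))
    (m : ℕ) (hm1 : 1 ≤ m) (hmN : m ≤ N)
    (hstep : ∀ i, 1 ≤ i → i < m → lam (i + 1) ≤ Q i) :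
    Q m ≤ Q 1 := by
  have hexp : 1 < Real.exp ε := by
    have := Real.exp_lt_exp.mpr hε
    simpa using this
  have key : ∀ i, 1 ≤ i → i < N → lam (i + 1) ≤ Q i → Q (i + 1) ≤ Q i := by
    intro i hi1 hiN hl
    set A := Real.exp ε * ∑ j ∈ Finset.Icc 1 i, lam j + ∑ j ∈ Finset.Icc (i + 1) N, lam j
      with hA
    set D := (i : ℝ) * Real.exp ε + N - i with hD
    have hi1R : (1 : ℝ) ≤ i := by exact_mod_cast hi1
    have hiNR : (i : ℝ) ≤ N := by exact_mod_cast le_of_lt hiN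
    have hDpos : 0 < D := by nlinarith
    have hcpos : 0 < Real.exp ε - 1 := by linarith
    have hsum1 : ∑ j ∈ Finset.Icc 1 (i + 1), lam j
        = (∑ j ∈ Finset.Icc 1 i, lam j) + lam (i + 1) := by
      rw [← Finset.sum_Icc_succ_top (by omega : 1 ≤ i + 1)]
    have hsplit : Finset.Icc (i + 1) N = insert (i + 1) (Finset.Icc (i + 2) N) := by
      ext x
      simp only [Finset.mem_Icc, Finset.mem_insert]
      omega
    have hnotmem : (i + 1) ∉ Finset.Icc (i + 2) N := by simp
    have hsum2 : ∑ j ∈ Finset.Icc (i + 1) N, lam j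
        = lam (i + 1) + ∑ j ∈ Finset.Icc (i + 2) N, lam j := by
      rw [hsplit, Finset.sum_insert hnotmem]
    have hQi : Q i = A / D := hQ i
    have hQi1 : Q (i + 1) = (A + (Real.exp ε - 1) * lam (i + 1)) / (D + (Real.exp ε - 1)) := by
      rw [hQ (i + 1), hsum1]
      have h2 : (i + 1 + 1) = i + 2 := by ring
      rw [h2]
      have hnum : Real.exp ε * ((∑ j ∈ Finset.Icc 1 i, lam j) + lam (i + 1))
          + ∑ j ∈ Finset.Icc (i + 2) N, lam j
          = A + (Real.exp ε - 1) * lam (i + 1) := by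
        rw [hA, hsum2]; ring
      have hden : ((i + 1 : ℕ) : ℝ) * Real.exp ε + N - (i + 1 : ℕ)
          = D + (Real.exp ε - 1) := by
        push_cast
        rw [hD]; ring
      rw [hnum, hden]
    rw [hQi1, hQi]
    exact brr_step_aux A D _ _ hDpos hcpos (hQi ▸ hl)
  clear hmono h0
  induction m, hm1 using Nat.le_induction with
  | base => exact le_refl _
  | succ n hn ih =>
    have h1 : Q (n + 1) ≤ Q n := key n hn (by omega) (hstep n hn (by omega))
    have h2 : Q n ≤ Q 1 := ih (by omega) (fun i hi1 hi2 => hstep i hi1 (by omega))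
    linarith
end

section
/- Fix a privacy budget ε > 0 and a sequence of integers m(N) with 1 ≤ m(N) ≤ N for all N and lim_{N→∞} m(N)/N = 1/(e^{ε/2} + 1). Then lim_{N→∞} max_{1 ≤ k ≤ N} Q_BRR(k, N, m(N)) / Q_GRR(k, N) = 2/(e^{ε/2} + 1). -/
open Real Filter Finset

/-- Sum of the `m` smallest elements of the multiset `{|j − k| : j = 1,…,N}`. -/
def Tm (k N m : ℕ) : ℤ :=
  (((((Finset.Icc 1 N).val.map (fun j => |(j : ℤ) - (k : ℤ)|))).sort (· ≤ ·)).take m).sum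

/-- Local expected error of GRR at priori point `k` over `{1,…,N}`. -/
noncomputable def QGRR (ε : ℝ) (k N : ℕ) : ℝ :=
  (∑ j ∈ Finset.Icc 1 N, |(j : ℝ) - (k : ℝ)|) / (Real.exp ε + N - 1)

/-- Local expected error of BRR with parameter `m` at priori point `k` over `{1,…,N}`. -/
noncomputable def QBRR (ε : ℝ) (k N m : ℕ) : ℝ :=
  (Real.exp ε * (Tm k N m : ℝ)
      + ((∑ j ∈ Finset.Icc 1 N, |(j : ℝ) - (k : ℝ)|) - (Tm k N m : ℝ)))
    / (m * Real.exp ε + N - m)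


section Helpers
open List

lemma filterlen (s : Multiset ℤ) (x : ℤ) :
    ((s.sort (·≤·)).filter (fun a => a ≤ x)).length = Multiset.card (s.filter (fun a => a ≤ x)) := by
  conv_rhs => rw [← Multiset.sort_eq s (·≤·)]
  simp only [Multiset.filter_coe, Multiset.coe_card]

lemma sorted_getElem_le {l : List ℤ} (h : l.Pairwise (·≤·)) {i j : ℕ} (hj : j < l.length)
    (hij : i ≤ j) : l[i]'(lt_of_le_of_lt hij hj) ≤ l[j] := by
  rcases eq_or_lt_of_le hij with rfl | hlt
  · rfl
  · exact List.pairwise_iff_getElem.mp h i j _ hj hlt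

lemma get_sort_mono {s t : Multiset ℤ} (ht : t ≤ s) {i : ℕ}
    (hi : i < (t.sort (·≤·)).length) (hi' : i < (s.sort (·≤·)).length) :
    (s.sort (·≤·))[i] ≤ (t.sort (·≤·))[i] := by
  by_contra hlt
  push_neg at hlt
  set l := s.sort (·≤·) with hl
  set r := t.sort (·≤·) with hr
  set x := r[i] with hx
  have hsl : l.Pairwise (·≤·) := Multiset.pairwise_sort s _
  have hsr : r.Pairwise (·≤·) := Multiset.pairwise_sort t _
  have h1 : i + 1 ≤ (r.filter (fun a => a ≤ x)).length := by
    have hall : ∀ a ∈ r.take (i+1), a ≤ x := by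
      intro a ha
      rw [List.mem_take_iff_getElem] at ha
      obtain ⟨j, hj, rfl⟩ := ha
      exact sorted_getElem_le hsr hi (by omega)
    calc i + 1 = (r.take (i+1)).length := by rw [List.length_take]; omega
    _ = ((r.take (i+1)).filter (fun a => a ≤ x)).length := by
        rw [List.length_filter_eq_length_iff.mpr (by simpa using hall)]
    _ ≤ (r.filter (fun a => a ≤ x)).length :=
        ((List.take_sublist _ _).filter _).length_le
  have h2 : (l.filter (fun a => a ≤ x)).length ≤ i := by
    have hdrop : ∀ a ∈ l.drop i, ¬ (a ≤ x) := by
      intro a ha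
      rw [List.mem_drop_iff_getElem] at ha
      obtain ⟨j, hj, rfl⟩ := ha
      have hle : l[i] ≤ l[i+j]'(by omega) := sorted_getElem_le hsl (by omega) (by omega)
      push_neg
      exact lt_of_lt_of_le hlt hle
    have hsplit : (l.filter (fun a => a ≤ x)).length
        = ((l.take i).filter (fun a => a ≤ x)).length + ((l.drop i).filter (fun a => a ≤ x)).length := by
      rw [← List.length_append, ← List.filter_append, List.take_append_drop]
    rw [hsplit]
    have hz : ((l.drop i).filter (fun a => a ≤ x)).length = 0 := by
      rw [List.length_eq_zero_iff, List.filter_eq_nil_iff]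
      simpa using hdrop
    rw [hz]
    have := List.length_filter_le (fun a => decide (a ≤ x)) (l.take i)
    have := List.length_take_le i l
    omega
  have hmono := Multiset.card_le_card (Multiset.filter_le_filter (fun a => a ≤ x) ht)
  rw [← filterlen, ← filterlen, ← hl, ← hr] at hmono
  omega


lemma sum_take_sort_le {s t : Multiset ℤ} (ht : t ≤ s) :
    ((s.sort (·≤·)).take (Multiset.card t)).sum ≤ t.sum := by
  set l := s.sort (·≤·) with hl
  set r := t.sort (·≤·) with hr
  have hrlen : r.length = Multiset.card t := by rw [hr]; exact Multiset.length_sort _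
  have hllen : l.length = Multiset.card s := by rw [hl]; exact Multiset.length_sort _
  have hcard : Multiset.card t ≤ Multiset.card s := Multiset.card_le_card ht
  have htsum : t.sum = r.sum := by
    conv_lhs => rw [← Multiset.sort_eq t (·≤·)]
    rw [← hr, Multiset.sum_coe]
  have key : ∀ j, j ≤ Multiset.card t → (l.take j).sum ≤ (r.take j).sum := by
    intro j
    induction j with
    | zero => simp
    | succ j ih =>
      intro hj
      have hjl : j < l.length := by omega
      have hjr : j < r.length := by omega
      rw [List.sum_take_succ l j hjl, List.sum_take_succ r j hjr]
      exact add_le_add (ih (by omega)) (get_sort_mono ht hjr hjl)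
  have hkey := key (Multiset.card t) le_rfl
  rw [htsum]
  conv_rhs => rw [← List.take_length (l := r)]
  rw [hrlen]
  exact hkey


lemma Tm_eq (k N mm : ℕ) : Tm k N mm
    = (((((Finset.Icc 1 N).val.map (fun j : ℕ => |(j : ℤ) - (k : ℤ)|))).sort (· ≤ ·)).take mm).sum := by
  rw [Tm]
  congr 2
  simp [Multiset.map_map]

lemma Tm_le_sum_subset (k N mm : ℕ) (J : Finset ℕ) (hJ : J ⊆ Finset.Icc 1 N) (hcard : J.card = mm) :
    Tm k N mm ≤ ∑ j ∈ J, |(j:ℤ) - (k:ℤ)| := by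
  have hle : J.val ≤ (Finset.Icc 1 N).val := Finset.val_le_iff.mpr hJ
  have ht := Multiset.map_le_map (f := fun j : ℕ => |(j:ℤ) - (k:ℤ)|) hle
  have h2 := sum_take_sort_le ht
  rw [Multiset.card_map, show Multiset.card J.val = mm from hcard] at h2
  rw [Tm_eq]
  exact h2

lemma Tm_nonneg (k N mm : ℕ) : 0 ≤ Tm k N mm := by
  rw [Tm_eq]
  apply List.sum_nonneg
  intro x hx
  have hx' := Multiset.mem_sort (α := ℤ) (· ≤ ·) |>.mp (List.mem_of_mem_take hx)
  rw [Multiset.mem_map] at hx'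
  obtain ⟨j, _, rfl⟩ := hx'
  exact abs_nonneg _

lemma gauss (n : ℕ) : (∑ i ∈ Finset.range n, (i:ℤ)) * 2 = n * (n - 1) := by
  induction n with
  | zero => simp
  | succ n ih =>
    rw [Finset.sum_range_succ]
    push_cast
    push_cast at ih
    ring_nf
    ring_nf at ih
    linarith

lemma Tm_one (N mm : ℕ) (h : mm ≤ N) : Tm 1 N mm * 2 = (mm:ℤ) * ((mm:ℤ) - 1) := by
  have hicc : (Finset.Icc 1 N).val = ↑(List.range' 1 N) := by
    rw [Nat.Icc_eq_range']
    norm_num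
  have hs : (Finset.Icc 1 N).val.map (fun j : ℕ => |(j:ℤ) - ((1:ℕ):ℤ)|)
      = ↑(List.map (fun i : ℕ => (i:ℤ)) (List.range N)) := by
    rw [hicc, List.range'_eq_map_range]
    simp only [Multiset.map_coe, List.map_map]
    congr 1
    apply List.map_congr_left
    intro i _
    simp only [Function.comp]
    push_cast
    rw [abs_of_nonneg (by omega : (0:ℤ) ≤ 1 + (i:ℤ) - 1)]
    omega
  have hsorted : (List.map (fun i : ℕ => (i:ℤ)) (List.range N)).Pairwise (·≤·) := by
    rw [List.pairwise_map]
    exact List.pairwise_lt_range.imp (fun hab => Int.ofNat_le.mpr (le_of_lt hab))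
  have hsort_eq : (((Finset.Icc 1 N).val.map (fun j : ℕ => |(j:ℤ) - ((1:ℕ):ℤ)|)).sort (·≤·))
      = List.map (fun i : ℕ => (i:ℤ)) (List.range N) := by
    apply List.Perm.eq_of_pairwise' (Multiset.pairwise_sort _ _) hsorted
    rw [← Multiset.coe_eq_coe, Multiset.sort_eq, hs]
  have h1 : Tm 1 N mm = ((List.map (fun i : ℕ => (i:ℤ)) (List.range N)).take mm).sum := by
    rw [Tm_eq, hsort_eq]
  rw [h1, ← List.map_take, List.take_range, min_eq_left h]
  have h2 : (List.map (fun i : ℕ => (i:ℤ)) (List.range mm)).sum = ∑ i ∈ Finset.range mm, (i:ℤ) := rfl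
  rw [h2, gauss]


lemma sum_lower (u k : ℕ) (huk : u ≤ k) :
    (∑ j ∈ Finset.Icc u k, ((k:ℤ) - (j:ℤ))) * 2 = ((k:ℤ)-u)*((k:ℤ)-u+1) := by
  rw [← Finset.Ico_add_one_right_eq_Icc, Finset.sum_Ico_eq_sum_range]
  set d := k - u with hd
  have hn : k + 1 - u = d + 1 := by omega
  rw [hn]
  have hc : ∀ i ∈ Finset.range (d+1), ((k:ℤ) - ((u + i : ℕ):ℤ)) = ((d:ℕ):ℤ) - (i:ℤ) := by
    intro i _
    have : ((d:ℕ):ℤ) = (k:ℤ) - u := by omega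
    push_cast
    omega
  rw [Finset.sum_congr rfl hc, Finset.sum_sub_distrib, Finset.sum_const, Finset.card_range,
    nsmul_eq_mul]
  have hg := gauss (d+1)
  have hcast : ((d:ℕ):ℤ) = (k:ℤ) - u := by omega
  push_cast at hg ⊢
  rw [hcast] at hg ⊢
  ring_nf at hg ⊢
  linarith

lemma sum_upper (k v : ℕ) (hkv : k ≤ v) :
    (∑ j ∈ Finset.Icc (k+1) v, ((j:ℤ) - (k:ℤ))) * 2 = ((v:ℤ)-k)*((v:ℤ)-k+1) := by
  rw [← Finset.Ico_add_one_right_eq_Icc, Finset.sum_Ico_eq_sum_range]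
  set d := v - k with hd
  have hn : v + 1 - (k+1) = d := by omega
  rw [hn]
  have hc : ∀ i ∈ Finset.range d, (((k + 1 + i : ℕ):ℤ) - (k:ℤ)) = (i:ℤ) + 1 := by
    intro i _; push_cast; ring
  rw [Finset.sum_congr rfl hc, Finset.sum_add_distrib, Finset.sum_const, Finset.card_range,
    nsmul_eq_mul]
  have hg := gauss d
  have hcast : ((d:ℕ):ℤ) = (v:ℤ) - k := by omega
  rw [hcast] at hg
  push_cast at hg ⊢
  try rw [hcast]
  try rw [hcast] at hg
  ring_nf at hg ⊢
  linarith

lemma sum_abs_window (u k v : ℕ) (huk : u ≤ k) (hkv : k ≤ v) :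
    (∑ j ∈ Finset.Icc u v, |(j:ℤ) - (k:ℤ)|) * 2
      = ((k:ℤ)-u)*((k:ℤ)-u+1) + ((v:ℤ)-k)*((v:ℤ)-k+1) := by
  have hsplit : Finset.Icc u v = Finset.Icc u k ∪ Finset.Icc (k+1) v := by
    ext j; simp only [Finset.mem_Icc, Finset.mem_union]; omega
  have hdisj : Disjoint (Finset.Icc u k) (Finset.Icc (k+1) v) := by
    rw [Finset.disjoint_left]; intro j hj hj'
    simp only [Finset.mem_Icc] at hj hj'; omega
  rw [hsplit, Finset.sum_union hdisj]
  have e1 : ∀ j ∈ Finset.Icc u k, |(j:ℤ) - (k:ℤ)| = (k:ℤ) - (j:ℤ) := by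
    intro j hj; simp only [Finset.mem_Icc] at hj
    have hjk : (j:ℤ) ≤ (k:ℤ) := by exact_mod_cast hj.2
    rw [abs_of_nonpos (by linarith)]; ring
  have e2 : ∀ j ∈ Finset.Icc (k+1) v, |(j:ℤ) - (k:ℤ)| = (j:ℤ) - (k:ℤ) := by
    intro j hj; simp only [Finset.mem_Icc] at hj
    have hjk : (k:ℤ) + 1 ≤ (j:ℤ) := by exact_mod_cast hj.1
    rw [abs_of_nonneg (by linarith)]
  rw [Finset.sum_congr rfl e1, Finset.sum_congr rfl e2, add_mul, sum_lower u k huk, sum_upper k v hkv]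


lemma genBC (x m N : ℤ) (hx : 0 ≤ x) (h2x : 2*x ≤ m) (hmN : m ≤ N) (hm : 1 ≤ m) :
    (x*(x+1) + (m-1-x)*(m-x)) * (N-1)^2 ≤ (m+2)^2 * (x*(x+1) + (N-1-x)*(N-x)) := by
  nlinarith [mul_nonneg hx (sub_nonneg.mpr hmN), sq_nonneg (N-m), sq_nonneg (m-2*x), mul_nonneg (mul_nonneg hx hx) (sub_nonneg.mpr hmN), mul_nonneg hx (mul_nonneg (sub_nonneg.mpr hmN) (sub_nonneg.mpr hmN)), mul_nonneg (mul_nonneg hx (sub_nonneg.mpr hmN)) (sub_nonneg.mpr h2x), mul_nonneg (mul_nonneg (sub_nonneg.mpr h2x) (sub_nonneg.mpr hmN)) hx, sq_nonneg x, mul_nonneg (mul_nonneg hx hx) hx]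


lemma genA (p q mz Nz S2 : ℤ) (hp : 0 ≤ p) (hq : 0 ≤ q) (hpq : p + q = mz - 1)
    (hdiff : (p - q)^2 ≤ 1) (hS : (Nz-1)^2 ≤ 2*S2) (hS0 : 0 ≤ S2) :
    (p*(p+1) + q*(q+1)) * (Nz-1)^2 ≤ (mz+2)^2 * S2 := by
  have h2G : 2*(p*(p+1) + q*(q+1)) ≤ mz^2 := by nlinarith
  have hG0 : 0 ≤ p*(p+1) + q*(q+1) := by nlinarith
  nlinarith [mul_le_mul h2G hS (sq_nonneg _) (by positivity : (0:ℤ) ≤ mz^2), sq_nonneg (Nz-1), sq_nonneg mz, mul_nonneg hS0 (by nlinarith : (0:ℤ) ≤ (mz+2)^2 - mz^2)]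


lemma Tm_key (N mm k : ℕ) (hN : 2 ≤ N) (hm1 : 1 ≤ mm) (hmN : mm ≤ N)
    (hk1 : 1 ≤ k) (hkN : k ≤ N) :
    2 * Tm k N mm * ((N:ℤ)-1)^2
      ≤ ((mm:ℤ)+2)^2 * (((k:ℤ)-1)*(k:ℤ) + ((N:ℤ)-k)*((N:ℤ)-k+1)) := by
  obtain ⟨u, hcase⟩ : ∃ u : ℕ, (2*(k-1) ≤ mm ∧ u = 1)
      ∨ (¬(2*(k-1) ≤ mm) ∧ 2*(N-k)+2 ≤ mm ∧ u = N - mm + 1)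
      ∨ (¬(2*(k-1) ≤ mm) ∧ ¬(2*(N-k)+2 ≤ mm) ∧ u = k - mm/2) := by
    by_cases h1 : 2*(k-1) ≤ mm
    · exact ⟨1, Or.inl ⟨h1, rfl⟩⟩
    · by_cases h2 : 2*(N-k)+2 ≤ mm
      · exact ⟨N - mm + 1, Or.inr (Or.inl ⟨h1, h2, rfl⟩)⟩
      · exact ⟨k - mm/2, Or.inr (Or.inr ⟨h1, h2, rfl⟩)⟩
  have hu1 : 1 ≤ u := by omega
  have huk : u ≤ k := by omega
  set v : ℕ := u + mm - 1 with hv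
  have hkv : k ≤ v := by omega
  have hvN : v ≤ N := by omega
  have hJsub : Finset.Icc u v ⊆ Finset.Icc 1 N := by
    intro j hj; simp only [Finset.mem_Icc] at *; omega
  have hJcard : (Finset.Icc u v).card = mm := by
    rw [Nat.card_Icc]; omega
  have hTle := Tm_le_sum_subset k N mm (Finset.Icc u v) hJsub hJcard
  have hW := sum_abs_window u k v huk hkv
  set P : ℤ := (k:ℤ) - u with hP
  set Q : ℤ := (v:ℤ) - k with hQ
  have h2T : 2 * Tm k N mm ≤ P*(P+1) + Q*(Q+1) := by
    rw [← hW]; linarith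
  have hP0 : 0 ≤ P := by rw [hP]; omega
  have hQ0 : 0 ≤ Q := by rw [hQ]; omega
  have hPQ : P + Q = (mm:ℤ) - 1 := by rw [hP, hQ]; omega
  have hNB : (0:ℤ) ≤ ((N:ℤ)-1)^2 := sq_nonneg _
  have hmain : (P*(P+1) + Q*(Q+1)) * ((N:ℤ)-1)^2
      ≤ ((mm:ℤ)+2)^2 * (((k:ℤ)-1)*(k:ℤ) + ((N:ℤ)-k)*((N:ℤ)-k+1)) := by
    rcases hcase with ⟨h1, hueq⟩ | ⟨h1, h2, hueq⟩ | ⟨h1, h2, hueq⟩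
    · -- u = 1 : genBC with x = k-1
      have hx : P = (k:ℤ) - 1 := by rw [hP]; omega
      have hy : Q = (mm:ℤ) - 1 - ((k:ℤ) - 1) := by rw [hQ]; omega
      rw [hx, hy]
      have hbc := genBC ((k:ℤ)-1) mm N (by omega) (by omega)
        (by exact_mod_cast hmN) (by exact_mod_cast hm1)
      refine le_trans (le_of_eq ?_) (le_trans hbc (le_of_eq ?_)) <;> ring
    · -- u = N - mm + 1 : genBC with x = N - k
      have hx : Q = (N:ℤ) - k := by rw [hQ]; omega
      have hp' : P = (mm:ℤ) - 1 - ((N:ℤ) - k) := by rw [hP]; omega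
      rw [hx, hp']
      have hbc := genBC ((N:ℤ)-k) mm N (by omega) (by omega)
        (by exact_mod_cast hmN) (by exact_mod_cast hm1)
      refine le_trans (le_of_eq ?_) (le_trans hbc (le_of_eq ?_)) <;> ring
    · -- centered window : genA
      apply genA P Q mm N _ hP0 hQ0 hPQ
      · have hPval : P = ((mm/2 : ℕ):ℤ) := by rw [hP]; omega
        have h01 : P - Q = 0 ∨ P - Q = 1 := by omega
        rcases h01 with h | h <;> rw [h] <;> norm_num
      · nlinarith [sq_nonneg ((k:ℤ) - 1 - ((N:ℤ) - k)), (by omega : (1:ℤ) ≤ (k:ℤ)), (by omega : (k:ℤ) ≤ (N:ℤ))]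
      · nlinarith [(by omega : (1:ℤ) ≤ (k:ℤ)), (by omega : (k:ℤ) ≤ (N:ℤ))]
  calc 2 * Tm k N mm * ((N:ℤ)-1)^2 ≤ (P*(P+1) + Q*(Q+1)) * ((N:ℤ)-1)^2 :=
        mul_le_mul_of_nonneg_right h2T hNB
    _ ≤ _ := hmain


lemma ddd (a b c : ℝ) (hc : c ≠ 0) : (a/c)/(b/c) = a/b := by
  rw [div_div_div_comm, div_self hc, div_one]

lemma ratio_eq (x T S DB DG : ℝ) (hS : S ≠ 0) (hDB : DB ≠ 0) (hDG : DG ≠ 0) :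
    ((x*T + (S - T))/DB) / (S/DG) = (DG/DB) * (1 + (x-1)*(T/S)) := by
  field_simp
  ring

lemma A_eq (x Nr mr : ℝ) (hN : 0 < Nr) (hDB : mr*x + Nr - mr ≠ 0) :
    ((x - 1)*(1/Nr)+1)/((mr/Nr)*(x-1)+1) = (x + Nr - 1)/(mr*x + Nr - mr) := by
  have hN' : Nr ≠ 0 := ne_of_gt hN
  have h1 : (x - 1)*(1/Nr)+1 = (x + Nr - 1)/Nr := by field_simp; ring
  have h2 : (mr/Nr)*(x-1)+1 = (mr*x + Nr - mr)/Nr := by field_simp; ring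
  rw [h1, h2, ddd _ _ _ hN']

lemma wL_eq (Nr mr : ℝ) (hN0 : Nr ≠ 0) (hN1 : Nr - 1 ≠ 0) :
    (mr/Nr) * ((mr/Nr - 1/Nr)/(1 - 1/Nr)) = mr*(mr-1)/(Nr*(Nr-1)) := by
  have h1 : 1 - 1/Nr = (Nr - 1)/Nr := by field_simp
  rw [h1]
  field_simp

lemma wU_eq (Nr mr : ℝ) (hN0 : Nr ≠ 0) (hN1 : Nr - 1 ≠ 0) :
    ((mr/Nr + 2*(1/Nr))/(1 - 1/Nr))^2 = (mr+2)^2/(Nr-1)^2 := by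
  have h1 : 1 - 1/Nr = (Nr - 1)/Nr := by field_simp
  have h2 : mr/Nr + 2*(1/Nr) = (mr + 2)/Nr := by field_simp
  rw [h1, h2, ddd _ _ _ hN0, div_pow]


lemma tendsto_aux (ε γ : ℝ) (c w : ℕ → ℝ) (hc : Tendsto c atTop (nhds γ))
    (hw : Tendsto w atTop (nhds (γ^2))) (hD0 : γ*(Real.exp ε - 1) + 1 ≠ 0) :
    Tendsto (fun N : ℕ => ((Real.exp ε - 1) * (1/(N:ℝ)) + 1) / (c N * (Real.exp ε - 1) + 1)
      * (1 + (Real.exp ε - 1) * w N)) atTop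
      (nhds ((1/(γ*(Real.exp ε - 1)+1)) * (1 + (Real.exp ε - 1)*γ^2))) := by
  have h0 : Tendsto (fun N : ℕ => 1/(N:ℝ)) atTop (nhds 0) := tendsto_one_div_atTop_nhds_zero_nat
  have hnum : Tendsto (fun N : ℕ => (Real.exp ε - 1) * (1/(N:ℝ)) + 1) atTop (nhds 1) := by
    have := (h0.const_mul (Real.exp ε - 1)).add_const 1
    simpa using this
  have hden : Tendsto (fun N : ℕ => c N * (Real.exp ε - 1) + 1) atTop
      (nhds (γ*(Real.exp ε - 1) + 1)) := (hc.mul_const _).add_const 1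
  have hfrac := hnum.div hden hD0
  have hsecond : Tendsto (fun N : ℕ => 1 + (Real.exp ε - 1) * w N) atTop
      (nhds (1 + (Real.exp ε - 1)*γ^2)) := (hw.const_mul _).const_add 1
  have := hfrac.mul hsecond
  simpa using this


-- real-valued sum formula
lemma sum_abs_real (k N : ℕ) (hk1 : 1 ≤ k) (hkN : k ≤ N) :
    (∑ j ∈ Finset.Icc 1 N, |(j : ℝ) - (k : ℝ)|) * 2
      = ((k:ℝ)-1)*(k:ℝ) + ((N:ℝ)-(k:ℝ))*((N:ℝ)-(k:ℝ)+1) := by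
  have h := sum_abs_window 1 k N hk1 hkN
  have h2 := congrArg (Int.cast : ℤ → ℝ) h
  push_cast at h2
  convert h2 using 2 <;> push_cast <;> ring


end Helpers

set_option maxHeartbeats 1000000 in
/-- If `m(N)/N → 1/(e^{ε/2}+1)`, then the maximum over `1 ≤ k ≤ N` of the local
expected-error ratio of BRR to GRR tends to `2/(e^{ε/2} + 1)` as `N → ∞`. -/
theorem brr_grr_sup_ratio_limit (ε : ℝ) (hε : 0 < ε) (m : ℕ → ℕ)
    (hm : ∀ N, 1 ≤ N → 1 ≤ m N ∧ m N ≤ N)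
    (hlim : Tendsto (fun N : ℕ => (m N : ℝ) / (N : ℝ)) atTop
      (nhds (1 / (Real.exp (ε / 2) + 1)))) :
    Tendsto (fun N : ℕ =>
        if h : (Finset.Icc 1 N).Nonempty then
          (Finset.Icc 1 N).sup' h (fun k => QBRR ε k N (m N) / QGRR ε k N)
        else 0)
      atTop (nhds (2 / (Real.exp (ε / 2) + 1))) := by
  have hE1 : 1 < Real.exp (ε/2) := by
    have := Real.exp_lt_exp.2 (show (0:ℝ) < ε/2 by linarith)
    simpa using this
  have hexp : Real.exp ε = Real.exp (ε/2)^2 := by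
    rw [sq, ← Real.exp_add]
    congr 1
    ring
  have he1 : 1 < Real.exp ε := by nlinarith
  set γ : ℝ := 1/(Real.exp (ε/2)+1) with hγ
  have hγpos : 0 < γ := by rw [hγ]; positivity
  have hD0 : γ*(Real.exp ε - 1) + 1 = Real.exp (ε/2) := by
    rw [hγ, hexp]
    have h1 : Real.exp (ε/2) + 1 ≠ 0 := by linarith
    field_simp
    ring
  have hD0ne : γ*(Real.exp ε - 1) + 1 ≠ 0 := by rw [hD0]; linarith
  have hval : (1/(γ*(Real.exp ε - 1)+1)) * (1 + (Real.exp ε - 1)*γ^2)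
      = 2/(Real.exp (ε/2)+1) := by
    rw [hD0, hexp, hγ]
    have h1 : Real.exp (ε/2) + 1 ≠ 0 := by linarith
    have h2 : Real.exp (ε/2) ≠ 0 := by linarith
    field_simp
    ring
  have h0 : Tendsto (fun N : ℕ => 1/(N:ℝ)) atTop (nhds 0) := tendsto_one_div_atTop_nhds_zero_nat
  have hDBpos : ∀ N : ℕ, 1 ≤ N → 0 < (m N:ℝ) * Real.exp ε + N - m N := by
    intro N hN
    obtain ⟨hm1, hmN⟩ := hm N hN
    have h1 : (1:ℝ) ≤ (m N:ℝ) := by exact_mod_cast hm1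
    have h2 : (m N:ℝ) ≤ (N:ℝ) := by exact_mod_cast hmN
    nlinarith
  -- lower bound function tendsto
  have hLBlim : Tendsto (fun N : ℕ => ((Real.exp ε + N - 1) / ((m N:ℝ) * Real.exp ε + N - m N))
      * (1 + (Real.exp ε - 1) * ((m N:ℝ)*((m N:ℝ)-1)/((N:ℝ)*((N:ℝ)-1))))) atTop
      (nhds (2/(Real.exp (ε/2)+1))) := by
    rw [← hval]
    have hw : Tendsto (fun N : ℕ => ((m N:ℝ)/(N:ℝ)) * (((m N:ℝ)/(N:ℝ) - 1/(N:ℝ))/(1 - 1/(N:ℝ))))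
        atTop (nhds (γ^2)) := by
      have h1 : Tendsto (fun N : ℕ => ((m N:ℝ)/(N:ℝ) - 1/(N:ℝ))/(1 - 1/(N:ℝ))) atTop
          (nhds ((γ-0)/(1-0))) :=
        (hlim.sub h0).div (tendsto_const_nhds.sub h0) (by norm_num)
      have h2 := hlim.mul h1
      have hv : γ * ((γ-0)/(1-0)) = γ^2 := by norm_num [sq]
      rwa [hv] at h2
    have haux := tendsto_aux ε γ (fun N : ℕ => (m N:ℝ)/(N:ℝ))
      (fun N : ℕ => ((m N:ℝ)/(N:ℝ)) * (((m N:ℝ)/(N:ℝ) - 1/(N:ℝ))/(1 - 1/(N:ℝ)))) hlim hw hD0ne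
    apply Tendsto.congr' _ haux
    filter_upwards [eventually_ge_atTop 2] with N hN
    have hN1 : (1:ℝ) < (N:ℝ) := by exact_mod_cast hN
    have hDB := hDBpos N (by omega)
    beta_reduce
    rw [A_eq _ _ _ (by linarith) (ne_of_gt hDB), wL_eq _ _ (by linarith) (by linarith)]
  -- upper bound function tendsto
  have hUBlim : Tendsto (fun N : ℕ => ((Real.exp ε + N - 1) / ((m N:ℝ) * Real.exp ε + N - m N))
      * (1 + (Real.exp ε - 1) * (((m N:ℝ)+2)^2/((N:ℝ)-1)^2))) atTop
      (nhds (2/(Real.exp (ε/2)+1))) := by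
    rw [← hval]
    have hw : Tendsto (fun N : ℕ => (((m N:ℝ)/(N:ℝ) + 2*(1/(N:ℝ)))/(1 - 1/(N:ℝ)))^2)
        atTop (nhds (γ^2)) := by
      have h1 : Tendsto (fun N : ℕ => ((m N:ℝ)/(N:ℝ) + 2*(1/(N:ℝ)))/(1 - 1/(N:ℝ))) atTop
          (nhds ((γ+2*0)/(1-0))) :=
        (hlim.add (h0.const_mul 2)).div (tendsto_const_nhds.sub h0) (by norm_num)
      have h2 := h1.pow 2
      have hv : ((γ+2*0)/(1-0))^2 = γ^2 := by norm_num
      rwa [hv] at h2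
    have haux := tendsto_aux ε γ (fun N : ℕ => (m N:ℝ)/(N:ℝ))
      (fun N : ℕ => (((m N:ℝ)/(N:ℝ) + 2*(1/(N:ℝ)))/(1 - 1/(N:ℝ)))^2) hlim hw hD0ne
    apply Tendsto.congr' _ haux
    filter_upwards [eventually_ge_atTop 2] with N hN
    have hN1 : (1:ℝ) < (N:ℝ) := by exact_mod_cast hN
    have hDB := hDBpos N (by omega)
    beta_reduce
    rw [A_eq _ _ _ (by linarith) (ne_of_gt hDB), wU_eq _ _ (by linarith) (by linarith)]
  apply tendsto_of_tendsto_of_tendsto_of_le_of_le' hLBlim hUBlim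
  · -- LB ≤ F
    filter_upwards [eventually_ge_atTop 2] with N hN
    obtain ⟨hm1, hmN⟩ := hm N (by omega)
    have hne : (Finset.Icc 1 N).Nonempty := ⟨1, by simp only [Finset.mem_Icc]; omega⟩
    rw [dif_pos hne]
    have h1mem : 1 ∈ Finset.Icc 1 N := by simp only [Finset.mem_Icc]; omega
    refine le_trans ?_ (Finset.le_sup' _ h1mem)
    have hN1 : (1:ℝ) < (N:ℝ) := by exact_mod_cast hN
    have hDG : 0 < Real.exp ε + (N:ℝ) - 1 := by nlinarith
    have hDB := hDBpos N (by omega)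
    have hS1val : (∑ j ∈ Finset.Icc 1 N, |(j : ℝ) - ((1:ℕ) : ℝ)|) * 2 = ((N:ℝ)-1)*(N:ℝ) := by
      have h := sum_abs_real 1 N le_rfl (by omega)
      push_cast at h ⊢
      linarith
    have hS1pos : 0 < ∑ j ∈ Finset.Icc 1 N, |(j : ℝ) - ((1:ℕ) : ℝ)| := by nlinarith
    have hT1 : ((Tm 1 N (m N) : ℤ):ℝ) * 2 = (m N:ℝ) * ((m N:ℝ) - 1) := by
      have h := congrArg (Int.cast : ℤ → ℝ) (Tm_one N (m N) hmN)
      push_cast at h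
      linarith
    have hratio : QBRR ε 1 N (m N) / QGRR ε 1 N
        = ((Real.exp ε + (N:ℝ) - 1)/((m N:ℝ) * Real.exp ε + N - m N))
          * (1 + (Real.exp ε - 1) * (((Tm 1 N (m N) : ℤ):ℝ)
              / (∑ j ∈ Finset.Icc 1 N, |(j : ℝ) - ((1:ℕ) : ℝ)|))) := by
      rw [QBRR, QGRR]
      push_cast
      exact ratio_eq _ _ _ _ _ (by push_cast at hS1pos; linarith) (ne_of_gt hDB) (ne_of_gt hDG)
    have hfrac : (m N:ℝ)*((m N:ℝ)-1)/((N:ℝ)*((N:ℝ)-1))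
        = ((Tm 1 N (m N) : ℤ):ℝ) / (∑ j ∈ Finset.Icc 1 N, |(j : ℝ) - ((1:ℕ) : ℝ)|) := by
      rw [div_eq_div_iff (by nlinarith : ((N:ℝ)*((N:ℝ)-1)) ≠ 0) (ne_of_gt hS1pos)]
      linear_combination (-(∑ j ∈ Finset.Icc 1 N, |(j : ℝ) - ((1:ℕ) : ℝ)|)) * hT1
        + ((Tm 1 N (m N) : ℤ):ℝ) * hS1val
    rw [hratio, hfrac]
  · -- F ≤ UB
    filter_upwards [eventually_ge_atTop 2] with N hN
    obtain ⟨hm1, hmN⟩ := hm N (by omega)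
    have hne : (Finset.Icc 1 N).Nonempty := ⟨1, by simp only [Finset.mem_Icc]; omega⟩
    rw [dif_pos hne]
    apply Finset.sup'_le
    intro k hk
    simp only [Finset.mem_Icc] at hk
    obtain ⟨hk1, hkN⟩ := hk
    have hN1 : (1:ℝ) < (N:ℝ) := by exact_mod_cast hN
    have hk1' : (1:ℝ) ≤ (k:ℝ) := by exact_mod_cast hk1
    have hkN' : (k:ℝ) ≤ (N:ℝ) := by exact_mod_cast hkN
    have hDG : 0 < Real.exp ε + (N:ℝ) - 1 := by nlinarith
    have hDB := hDBpos N (by omega)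
    have hSval := sum_abs_real k N hk1 hkN
    have hSpos : 0 < ∑ j ∈ Finset.Icc 1 N, |(j : ℝ) - (k : ℝ)| := by
      nlinarith [sq_nonneg ((k:ℝ)-1), sq_nonneg ((N:ℝ)-(k:ℝ))]
    have hT0 : (0:ℝ) ≤ ((Tm k N (m N) : ℤ):ℝ) := by exact_mod_cast Tm_nonneg k N (m N)
    have hkey : 2 * ((Tm k N (m N) : ℤ):ℝ) * ((N:ℝ)-1)^2
        ≤ ((m N:ℝ)+2)^2 * (((k:ℝ)-1)*(k:ℝ) + ((N:ℝ)-(k:ℝ))*((N:ℝ)-(k:ℝ)+1)) := by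
      have hkk := Tm_key N (m N) k hN hm1 hmN hk1 hkN
      have h2 : ((2 * Tm k N (m N) * ((N:ℤ)-1)^2 : ℤ) : ℝ)
          ≤ ((((m N:ℤ)+2)^2 * (((k:ℤ)-1)*(k:ℤ) + ((N:ℤ)-k)*((N:ℤ)-k+1)) : ℤ) : ℝ) :=
        Int.cast_le.mpr hkk
      push_cast at h2
      convert h2 using 1 <;> push_cast <;> ring
    have hTS : ((Tm k N (m N) : ℤ):ℝ)/(∑ j ∈ Finset.Icc 1 N, |(j : ℝ) - (k : ℝ)|)
        ≤ ((m N:ℝ)+2)^2 / ((N:ℝ)-1)^2 := by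
      rw [div_le_div_iff₀ hSpos (pow_pos (by linarith : (0:ℝ) < (N:ℝ)-1) 2)]
      rw [← hSval] at hkey
      set S := (∑ j ∈ Finset.Icc 1 N, |(j : ℝ) - (k : ℝ)|) with hS
      ring_nf at hkey ⊢
      linarith [hkey]
    have hratio : QBRR ε k N (m N) / QGRR ε k N
        = ((Real.exp ε + (N:ℝ) - 1)/((m N:ℝ) * Real.exp ε + N - m N))
          * (1 + (Real.exp ε - 1) * (((Tm k N (m N) : ℤ):ℝ)
              / (∑ j ∈ Finset.Icc 1 N, |(j : ℝ) - (k : ℝ)|))) := by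
      rw [QBRR, QGRR]
      exact ratio_eq _ _ _ _ _ (ne_of_gt hSpos) (ne_of_gt hDB) (ne_of_gt hDG)
    rw [hratio]
    have hA0 : (0:ℝ) ≤ (Real.exp ε + (N:ℝ) - 1)/((m N:ℝ) * Real.exp ε + N - m N) :=
      div_nonneg (le_of_lt hDG) (le_of_lt hDB)
    gcongr
end

section
/- For every ε > 0, the difference between 2/(e^{ε/2} + 1) and e^{ε/2} − ((e^{ε/2} − 1)/(e^{ε/2} + 1))·(√(e^ε + 2e^{ε/2} + 2) + 1) equals ((e^{ε/2} − 1)/(e^{ε/2} + 1)) · (√(e^ε + 2e^{ε/2} + 2) + e^{ε/2} + 1)^{−1}, and this quantity is strictly less than (1/2)·(e^{ε/2} + 1)^{−1}. -/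
open Real

/-- The gap between the asymptotic upper bound `2/(e^{ε/2}+1)` and the asymptotic lower
bound `e^{ε/2} − ((e^{ε/2}−1)/(e^{ε/2}+1))·(√(e^ε + 2e^{ε/2} + 2) + 1)` of the local
expected-error ratio of BRR to GRR equals
`((e^{ε/2} − 1)/(e^{ε/2} + 1))·(√(e^ε + 2e^{ε/2} + 2) + e^{ε/2} + 1)⁻¹`,
and is strictly less than `(1/2)·(e^{ε/2} + 1)⁻¹`. -/
theorem brr_grr_ratio_bounds_gap (ε : ℝ) (hε : 0 < ε) :
    (2 / (Real.exp (ε / 2) + 1)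
        - (Real.exp (ε / 2)
            - (Real.exp (ε / 2) - 1) / (Real.exp (ε / 2) + 1)
                * (Real.sqrt (Real.exp ε + 2 * Real.exp (ε / 2) + 2) + 1))
      = (Real.exp (ε / 2) - 1) / (Real.exp (ε / 2) + 1)
          * (Real.sqrt (Real.exp ε + 2 * Real.exp (ε / 2) + 2) + Real.exp (ε / 2) + 1)⁻¹) ∧
    ((Real.exp (ε / 2) - 1) / (Real.exp (ε / 2) + 1)
        * (Real.sqrt (Real.exp ε + 2 * Real.exp (ε / 2) + 2) + Real.exp (ε / 2) + 1)⁻¹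
      < (1 / 2) * (Real.exp (ε / 2) + 1)⁻¹) := by
  set x := Real.exp (ε / 2) with hxdef
  have hx1 : 1 < x := by
    rw [hxdef, show (1:ℝ) = Real.exp 0 by simp]
    exact Real.exp_lt_exp.mpr (by linarith)
  have hxe : Real.exp ε = x * x := by
    rw [hxdef, ← Real.exp_add]; ring_nf
  have harg : Real.exp ε + 2 * x + 2 = x * x + 2 * x + 2 := by rw [hxe]
  set s := Real.sqrt (Real.exp ε + 2 * x + 2) with hsdef
  have hs2 : s * s = x * x + 2 * x + 2 := by
    rw [hsdef, harg]
    exact Real.mul_self_sqrt (by nlinarith)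
  have hspos : 0 < s := by
    rw [hsdef]; apply Real.sqrt_pos.mpr; nlinarith
  have hx1p : (0:ℝ) < x + 1 := by linarith
  have hden : (0:ℝ) < s + x + 1 := by linarith
  constructor
  · field_simp
    nlinarith [hs2, sq_nonneg (s - x - 1)]
  · have key : (x - 1) * (s + x + 1)⁻¹ < 1 / 2 := by
      rw [← div_eq_mul_inv, div_lt_iff₀ hden]
      nlinarith
    calc (x - 1) / (x + 1) * (s + x + 1)⁻¹
        = (x - 1) * (s + x + 1)⁻¹ * (x + 1)⁻¹ := by
          rw [div_eq_mul_inv]; ring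
      _ < 1 / 2 * (x + 1)⁻¹ := by
          exact mul_lt_mul_of_pos_right key (inv_pos.mpr hx1p)
end

section
/- Let N ≥ 2 be an even integer and let ε be real. Define λ_j = ⌊j/2⌋ for 1 ≤ j ≤ N − 1 and λ_N = N/2. Then for every odd integer i with 1 ≤ i ≤ N − 1: e^ε·Σ_{j=1}^{i−1} (λ_i − λ_j) + Σ_{j=i+1}^{N} (λ_i − λ_j) = ((e^ε − 1)/4)·i² + ((N − (e^ε − 1))/2)·i + ((e^ε − 1) − N² − 2N)/4. -/
open Finset

private lemma sumA (m : ℕ) :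
    ∑ j ∈ Finset.Ioc 0 (2*m), ((j/2 : ℕ) : ℝ) = (m:ℝ)^2 := by
  induction m with
  | zero => simp
  | succ m ih =>
    rw [show 2*(m+1) = (2*m+1)+1 by ring, Finset.sum_Ioc_succ_top (by omega),
      Finset.sum_Ioc_succ_top (by omega), ih,
      show (2*m+1)/2 = m by omega, show ((2*m+1)+1)/2 = m+1 by omega]
    push_cast; ring

private lemma sumB (m : ℕ) :
    ∑ j ∈ Finset.Ioc 0 (2*m+1), ((j/2 : ℕ) : ℝ) = (m:ℝ)^2 + m := by
  rw [Finset.sum_Ioc_succ_top (by omega), sumA, show (2*m+1)/2 = m by omega]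

private lemma floor_half (j : ℕ) : (⌊(j : ℝ) / 2⌋ : ℤ) = ((j/2 : ℕ) : ℤ) := by
  rw [Int.floor_eq_iff]
  constructor
  · rw [le_div_iff₀ (by norm_num)]
    exact_mod_cast Nat.div_mul_le_self j 2
  · rw [div_lt_iff₀ (by norm_num)]
    exact_mod_cast (by omega : j < (j/2+1)*2)

/-- For the middle point of an even-sized equidistant domain, with sorted losses
`λ_j = ⌊j/2⌋` for `1 ≤ j ≤ N − 1` and `λ_N = N/2`, for every odd `1 ≤ i ≤ N − 1`:
`e^ε·Σ_{j=1}^{i−1} (λ_i − λ_j) + Σ_{j=i+1}^{N} (λ_i − λ_j)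
  = ((e^ε − 1)/4)·i² + ((N − (e^ε − 1))/2)·i + ((e^ε − 1) − N² − 2N)/4`. -/
theorem brr_middle_point_derivative_numerator_even (ε : ℝ) (N : ℕ) (hN : 2 ≤ N)
    (hNeven : Even N) (lam : ℕ → ℝ)
    (hlam : ∀ j, 1 ≤ j → j ≤ N - 1 → lam j = ((⌊(j : ℝ) / 2⌋ : ℤ) : ℝ))
    (hlamN : lam N = (N : ℝ) / 2)
    (i : ℕ) (hodd : Odd i) (hi1 : 1 ≤ i) (hiN : i ≤ N - 1) :
    Real.exp ε * (∑ j ∈ Finset.Icc 1 (i - 1), (lam i - lam j))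
        + (∑ j ∈ Finset.Icc (i + 1) N, (lam i - lam j))
      = ((Real.exp ε - 1) / 4) * (i : ℝ) ^ 2
          + (((N : ℝ) - (Real.exp ε - 1)) / 2) * (i : ℝ)
          + ((Real.exp ε - 1) - (N : ℝ) ^ 2 - 2 * (N : ℝ)) / 4 := by
  obtain ⟨m, hm⟩ := hodd
  obtain ⟨k, hk⟩ := hNeven
  have hk2 : N = 2 * k := by omega
  obtain ⟨K, hK⟩ : ∃ K, k = K + 1 := ⟨k - 1, by omega⟩
  have hmK : m ≤ K := by omega
  have hm' : ∀ j, 1 ≤ j → j ≤ N - 1 → lam j = ((j/2 : ℕ) : ℝ) := by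
    intro j h1 h2
    rw [hlam j h1 h2, floor_half]
    norm_cast
  have hlami : lam i = (m : ℝ) := by
    rw [hm' i hi1 hiN, show i/2 = m by omega]
  have h1 : ∑ j ∈ Finset.Icc 1 (i - 1), (lam i - lam j) = (m:ℝ)^2 := by
    have e0 : Finset.Icc 1 (i-1) = Finset.Ioc 0 (2*m) := by
      ext x; simp only [Finset.mem_Icc, Finset.mem_Ioc]; omega
    rw [e0]
    have hc : ∀ j ∈ Finset.Ioc 0 (2*m), lam i - lam j = (m:ℝ) - ((j/2 : ℕ) : ℝ) := by
      intro j hj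
      simp only [Finset.mem_Ioc] at hj
      rw [hlami, hm' j (by omega) (by omega)]
    rw [Finset.sum_congr rfl hc, Finset.sum_sub_distrib, sumA, Finset.sum_const,
      Nat.card_Ioc, Nat.sub_zero, nsmul_eq_mul]
    push_cast; ring
  have h2 : ∑ j ∈ Finset.Icc (i + 1) N, (lam i - lam j) = -(((k:ℝ) - m)^2) := by
    have e1 : Finset.Icc (i+1) N = Finset.Ioc i N := by
      ext x; simp only [Finset.mem_Icc, Finset.mem_Ioc]; omega
    rw [e1]
    have hsplit : ∑ j ∈ Finset.Ioc i N, (lam i - lam j)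
        = ∑ j ∈ Finset.Ioc i (N-1), (lam i - lam j) + (lam i - lam N) := by
      have h := Finset.sum_Ioc_succ_top (f := fun j => lam i - lam j)
        (show i ≤ N - 1 from hiN)
      rw [show (N-1)+1 = N by omega] at h
      exact h
    have hc : ∀ j ∈ Finset.Ioc i (N-1), lam i - lam j = (m:ℝ) - ((j/2 : ℕ) : ℝ) := by
      intro j hj
      simp only [Finset.mem_Ioc] at hj
      rw [hlami, hm' j (by omega) hj.2]
    have h01 : ∑ j ∈ Finset.Ioc 0 i, ((j/2 : ℕ) : ℝ) = (m:ℝ)^2 + m := by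
      rw [show i = 2*m+1 from hm]; exact sumB m
    have h02 : ∑ j ∈ Finset.Ioc 0 (N-1), ((j/2 : ℕ) : ℝ) = (K:ℝ)^2 + K := by
      rw [show N - 1 = 2*K+1 by omega]; exact sumB K
    have hconsec : ∑ j ∈ Finset.Ioc 0 i, ((j/2 : ℕ) : ℝ)
        + ∑ j ∈ Finset.Ioc i (N-1), ((j/2 : ℕ) : ℝ)
        = ∑ j ∈ Finset.Ioc 0 (N-1), ((j/2 : ℕ) : ℝ) :=
      Finset.sum_Ioc_consecutive _ (by omega) (by omega)
    have hmid : ∑ j ∈ Finset.Ioc i (N-1), (lam i - lam j)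
        = ((2*(K - m) : ℕ) : ℝ) * m - ((K:ℝ)^2 + K - ((m:ℝ)^2 + m)) := by
      rw [Finset.sum_congr rfl hc, Finset.sum_sub_distrib, Finset.sum_const,
        Nat.card_Ioc, show N - 1 - i = 2*(K - m) by omega, nsmul_eq_mul]
      have : ∑ j ∈ Finset.Ioc i (N-1), ((j/2 : ℕ) : ℝ)
          = (K:ℝ)^2 + K - ((m:ℝ)^2 + m) := by linarith [hconsec, h01, h02]
      rw [this]
    rw [hsplit, hmid, hlami, hlamN,
      show ((2*(K - m) : ℕ) : ℝ) = 2*((K:ℝ) - m) by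
        push_cast [Nat.cast_sub hmK]; ring,
      show (N:ℝ) = 2*((K:ℝ)+1) by rw [hk2, hK]; push_cast; ring,
      show (k:ℝ) = (K:ℝ)+1 by rw [hK]; push_cast; ring]
    ring
  rw [h1, h2, show (i:ℝ) = 2*(m:ℝ)+1 by rw [hm]; push_cast; ring,
    show (N:ℝ) = 2*(k:ℝ) by rw [hk2]; push_cast; ring]
  ring
end

section
/- For every real ε > 0 and every real N > 0, the quadratic g(x) = ((e^ε − 1)/4)·x² + ((N − (e^ε − 1))/2)·x + ((e^ε − 1) − N² − 2N)/4 has discriminant ((N − (e^ε−1))/2)² − (e^ε−1)·((e^ε−1) − N² − 2N)/4 = e^ε·N²/4, and x₀ = N/(e^{ε/2} + 1) + 1 is its larger root, i.e., g(x₀) = 0 and g(x) > 0 for all x > x₀. -/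
open Real

/-- The middle-point quadratic
`g(x) = ((e^ε − 1)/4)·x² + ((N − (e^ε − 1))/2)·x + ((e^ε − 1) − N² − 2N)/4`
has discriminant `((N − (e^ε−1))/2)² − (e^ε−1)·((e^ε−1) − N² − 2N)/4 = e^ε·N²/4`,
and `x₀ = N/(e^{ε/2} + 1) + 1` is its larger root: `g(x₀) = 0` and `g(x) > 0`
for all `x > x₀`. -/
theorem brr_middle_quadratic_root (ε N : ℝ) (hε : 0 < ε) (hN : 0 < N)
    (g : ℝ → ℝ)
    (hg : ∀ x, g x = ((Real.exp ε - 1) / 4) * x ^ 2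
        + ((N - (Real.exp ε - 1)) / 2) * x
        + ((Real.exp ε - 1) - N ^ 2 - 2 * N) / 4) :
    (((N - (Real.exp ε - 1)) / 2) ^ 2
        - (Real.exp ε - 1) * ((Real.exp ε - 1) - N ^ 2 - 2 * N) / 4
      = Real.exp ε * N ^ 2 / 4) ∧
    g (N / (Real.exp (ε / 2) + 1) + 1) = 0 ∧
    ∀ x, N / (Real.exp (ε / 2) + 1) + 1 < x → 0 < g x := by
  set s := Real.exp (ε / 2) with hsdef
  have hs1 : 1 < s := by
    have h := Real.add_one_le_exp (ε / 2)
    rw [← hsdef] at h; linarith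
  have hse : Real.exp ε = s ^ 2 := by
    rw [hsdef, show ε = ε / 2 + ε / 2 by ring, Real.exp_add]; ring
  have hs0 : (0:ℝ) < s + 1 := by linarith
  refine ⟨?_, ?_, ?_⟩
  · rw [hse]; ring
  · rw [hg, hse]
    field_simp
    ring
  · intro x hx
    rw [hg, hse]
    have hx' : N / (s + 1) < x - 1 := by linarith
    have h1 : N < (x - 1) * (s + 1) := by
      rwa [div_lt_iff₀ hs0] at hx'
    have h2 : 0 < (s - 1) * (x - 1) + N := by
      have hy : 0 < x - 1 := lt_trans (div_pos hN hs0) hx'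
      nlinarith
    nlinarith [mul_pos (sub_pos.mpr h1) h2]
end

section
/- Given a privacy budget ε > 0, an integer N ≥ 2, and real quality losses 0 ≤ λ₁ ≤ λ₂ ≤ ⋯ ≤ λ_N, define for 1 ≤ m ≤ N the bipartite expected error Q(m) = (e^ε·Σ_{i=1}^m λ_i + Σ_{i=m+1}^N λ_i)/(m·e^ε + N − m). Then for every m with 1 ≤ m ≤ N − 1: Q(m+1) ≤ Q(m) if and only if λ_{m+1} ≤ Q(m), and Q(m+1) < Q(m) if and only if λ_{m+1} < Q(m). -/
open Real Finset

/-- For the bipartite expected error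
`Q(m) = (e^ε·Σ_{i≤m} λ_i + Σ_{i>m} λ_i)/(m·e^ε + N − m)` with sorted nonnegative losses,
for every `1 ≤ m ≤ N − 1`: `Q(m+1) ≤ Q(m) ↔ λ_{m+1} ≤ Q(m)`, and
`Q(m+1) < Q(m) ↔ λ_{m+1} < Q(m)`. -/
theorem brr_step_sign_criterion (ε : ℝ) (hε : 0 < ε) (N : ℕ) (hN : 2 ≤ N)
    (lam : ℕ → ℝ) (h0 : 0 ≤ lam 1)
    (hmono : ∀ i, 1 ≤ i → i < N → lam i ≤ lam (i + 1))
    (Q : ℕ → ℝ)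
    (hQ : ∀ m, Q m =
      (Real.exp ε * ∑ i ∈ Finset.Icc 1 m, lam i + ∑ i ∈ Finset.Icc (m + 1) N, lam i)
        / (m * Real.exp ε + N - m))
    (m : ℕ) (hm1 : 1 ≤ m) (hmN : m ≤ N - 1) :
    (Q (m + 1) ≤ Q m ↔ lam (m + 1) ≤ Q m) ∧
    (Q (m + 1) < Q m ↔ lam (m + 1) < Q m) := by
  have hE : 1 < Real.exp ε := by nlinarith [Real.add_one_le_exp ε]
  have hmN' : m + 1 ≤ N := by omega
  have hm1R : (1:ℝ) ≤ (m:ℝ) := by exact_mod_cast hm1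
  have hNR : (2:ℝ) ≤ (N:ℝ) := by exact_mod_cast hN
  have hmNR : (m:ℝ) + 1 ≤ (N:ℝ) := by exact_mod_cast hmN'
  set E := Real.exp ε with hEdef
  have hsum1 : ∑ i ∈ Finset.Icc 1 (m+1), lam i
      = ∑ i ∈ Finset.Icc 1 m, lam i + lam (m+1) :=
    Finset.sum_Icc_succ_top (by omega) lam
  have hsum2 : ∑ i ∈ Finset.Icc (m+1) N, lam i
      = lam (m+1) + ∑ i ∈ Finset.Icc (m+2) N, lam i := by
    rw [← Finset.add_sum_erase _ lam (Finset.mem_Icc.mpr ⟨le_refl _, hmN'⟩),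
      Finset.Icc_erase_left, ← Finset.Icc_add_one_left_eq_Ioc]
    rfl
  have hD : 0 < (m:ℝ) * E + N - m := by nlinarith
  have hD' : 0 < ((m:ℝ) + 1) * E + N - (m + 1) := by nlinarith
  have hQm : Q m = (E * ∑ i ∈ Finset.Icc 1 m, lam i
      + (lam (m+1) + ∑ i ∈ Finset.Icc (m+2) N, lam i)) / ((m:ℝ) * E + N - m) := by
    rw [hQ m, hsum2]
  have hQm1 : Q (m+1) = (E * (∑ i ∈ Finset.Icc 1 m, lam i + lam (m+1))
      + ∑ i ∈ Finset.Icc (m+2) N, lam i) / (((m:ℝ) + 1) * E + N - (m + 1)) := by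
    rw [hQ (m+1), hsum1]
    push_cast
    ring_nf
  set S1 := ∑ i ∈ Finset.Icc 1 m, lam i
  set S2 := ∑ i ∈ Finset.Icc (m+2) N, lam i
  constructor
  · rw [hQm, hQm1, div_le_div_iff₀ hD' hD, le_div_iff₀ hD]
    constructor <;> intro h <;> nlinarith
  · rw [hQm, hQm1, div_lt_div_iff₀ hD' hD, lt_div_iff₀ hD]
    constructor <;> intro h <;> nlinarith
end

section
/- Given a privacy budget ε > 0, an integer N ≥ 3, and real quality losses 0 ≤ λ₁ ≤ λ₂ ≤ ⋯ ≤ λ_N, define for 1 ≤ m ≤ N the bipartite expected error Q(m) = (e^ε·Σ_{i=1}^m λ_i + Σ_{i=m+1}^N λ_i)/(m·e^ε + N − m). Then the sequence Q(1), Q(2), …, Q(N) is unimodal in the following sense: for every m with 1 ≤ m ≤ N − 2, if Q(m+1) ≥ Q(m) then Q(m+2) ≥ Q(m+1). Consequently, the local search that increases m while the error strictly decreases and stops at the first non-decrease returns a global minimizer of Q over {1,…,N}. -/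
open Real Finset

lemma brr_aux1 (A B L d c : ℝ) (hd : 0 < d) (hc : 0 < c)
    (hB : B * (d + c) = A * d + c * L) (h : A ≤ B) : B ≤ L := by
  nlinarith

lemma brr_aux2 (B C L d c : ℝ) (hd : 0 < d) (hc : 0 < c)
    (hC : C * (d + c) = B * d + c * L) (h : B ≤ L) : B ≤ C := by
  nlinarith

/-- For the bipartite expected error
`Q(m) = (e^ε·Σ_{i≤m} λ_i + Σ_{i>m} λ_i)/(m·e^ε + N − m)` with sorted nonnegative losses,
the sequence `Q(1), …, Q(N)` is unimodal: if `Q(m+1) ≥ Q(m)` then `Q(m+2) ≥ Q(m+1)`.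
Consequently, the local search that increases `m` while the error strictly decreases and
stops at the first non-decrease returns a global minimizer of `Q` over `{1,…,N}`. -/
theorem brr_unimodal_local_search_optimal (ε : ℝ) (hε : 0 < ε) (N : ℕ) (hN : 3 ≤ N)
    (lam : ℕ → ℝ) (h0 : 0 ≤ lam 1)
    (hmono : ∀ i, 1 ≤ i → i < N → lam i ≤ lam (i + 1))
    (Q : ℕ → ℝ)
    (hQ : ∀ m, Q m =
      (Real.exp ε * ∑ i ∈ Finset.Icc 1 m, lam i + ∑ i ∈ Finset.Icc (m + 1) N, lam i)
        / (m * Real.exp ε + N - m)) :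
    (∀ m, 1 ≤ m → m ≤ N - 2 → Q m ≤ Q (m + 1) → Q (m + 1) ≤ Q (m + 2)) ∧
    (∀ mstar, 1 ≤ mstar → mstar ≤ N →
      (∀ i, 1 ≤ i → i < mstar → Q (i + 1) < Q i) →
      (mstar = N ∨ Q mstar ≤ Q (mstar + 1)) →
      ∀ m, 1 ≤ m → m ≤ N → Q mstar ≤ Q m) := by
  set E := Real.exp ε with hEdef
  have hE : 1 < E := by
    have h := Real.exp_lt_exp.mpr hε
    rwa [Real.exp_zero] at h
  have hN3 : (3:ℝ) ≤ (N:ℝ) := by exact_mod_cast hN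
  set D : ℕ → ℝ := fun m => (m:ℝ) * E + (N:ℝ) - (m:ℝ) with hDdef
  have hD : ∀ m, 0 < D m := by
    intro m
    have hm : (0:ℝ) ≤ (m:ℝ) := Nat.cast_nonneg m
    simp only [hDdef]
    nlinarith
  have hc : (0:ℝ) < E - 1 := by linarith
  -- key recurrence
  have key : ∀ m, 1 ≤ m → m + 1 ≤ N →
      Q (m + 1) * (D m + (E - 1)) = Q m * D m + (E - 1) * lam (m + 1) := by
    intro m hm1 hmN
    have hD1 : D (m + 1) = D m + (E - 1) := by
      simp only [hDdef]; push_cast; ring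
    have hs1 : ∑ i ∈ Finset.Icc 1 (m + 1), lam i
        = (∑ i ∈ Finset.Icc 1 m, lam i) + lam (m + 1) :=
      Finset.sum_Icc_succ_top (by omega) lam
    have hs2 : ∑ i ∈ Finset.Icc (m + 1) N, lam i
        = lam (m + 1) + ∑ i ∈ Finset.Icc (m + 2) N, lam i := by
      have h1 : Finset.Icc (m + 1) N = Finset.Ioc m N := by
        ext x; simp
      have h2 : Finset.Icc (m + 2) N = Finset.Ioc (m + 1) N := by
        ext x; simp; omega
      have h3 : (∑ i ∈ Finset.Ioc m (m+1), lam i) + ∑ i ∈ Finset.Ioc (m+1) N, lam i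
          = ∑ i ∈ Finset.Ioc m N, lam i :=
        Finset.sum_Ioc_consecutive lam (by omega) (by omega)
      have h4 : Finset.Ioc m (m+1) = {m+1} := by rw [Nat.Ioc_succ_singleton]
      rw [h1, h2, ← h3, h4, Finset.sum_singleton]
    have hq1 : Q (m + 1) * D (m + 1)
        = E * ∑ i ∈ Finset.Icc 1 (m + 1), lam i + ∑ i ∈ Finset.Icc (m + 2) N, lam i := by
      rw [hQ]
      exact div_mul_cancel₀ _ (ne_of_gt (hD (m + 1)))
    have hq0 : Q m * D m
        = E * ∑ i ∈ Finset.Icc 1 m, lam i + ∑ i ∈ Finset.Icc (m + 1) N, lam i := by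
      rw [hQ]
      exact div_mul_cancel₀ _ (ne_of_gt (hD m))
    rw [← hD1, hq1, hq0, hs1, hs2]
    ring
  have part1 : ∀ m, 1 ≤ m → m ≤ N - 2 → Q m ≤ Q (m + 1) → Q (m + 1) ≤ Q (m + 2) := by
    intro m hm1 hm2 hle
    have hk1 := key m hm1 (by omega)
    have hk2 := key (m + 1) (by omega) (by omega)
    have hBL : Q (m + 1) ≤ lam (m + 1) := brr_aux1 _ _ _ _ _ (hD m) hc hk1 hle
    have hLL : lam (m + 1) ≤ lam (m + 2) := hmono (m + 1) (by omega) (by omega)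
    exact brr_aux2 _ _ _ _ _ (hD (m + 1)) hc hk2 (le_trans hBL hLL)
  refine ⟨part1, ?_⟩
  intro mstar hms1 hmsN hdesc hstop m hm1 hmN
  rcases le_or_gt m mstar with hle | hlt
  · -- m ≤ mstar : descending chain
    have hdown : ∀ k, 1 ≤ mstar - k → Q mstar ≤ Q (mstar - k) := by
      intro k
      induction k with
      | zero => intro _; simp
      | succ k ih =>
        intro hk
        have hlt' : mstar - (k + 1) < mstar := by omega
        have h1 : Q (mstar - (k + 1) + 1) < Q (mstar - (k + 1)) :=
          hdesc _ (by omega) (by omega)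
        have h2 : mstar - (k + 1) + 1 = mstar - k := by omega
        rw [h2] at h1
        rcases Nat.eq_or_lt_of_le (show 1 ≤ mstar - k by omega) with h | h
        · calc Q mstar ≤ Q (mstar - k) := ih (by omega)
               _ ≤ Q (mstar - (k + 1)) := le_of_lt h1
        · calc Q mstar ≤ Q (mstar - k) := ih (by omega)
               _ ≤ Q (mstar - (k + 1)) := le_of_lt h1
    have : m = mstar - (mstar - m) := by omega
    rw [this]
    exact hdown _ (by omega)
  · -- m > mstar : ascending
    have hmsN' : mstar < N := lt_of_lt_of_le hlt hmN
    have hstep : Q mstar ≤ Q (mstar + 1) := by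
      rcases hstop with h | h
      · omega
      · exact h
    have hup : ∀ k, mstar + k ≤ N →
        Q mstar ≤ Q (mstar + k) ∧ (mstar + k < N → Q (mstar + k) ≤ Q (mstar + k + 1)) := by
      intro k
      induction k with
      | zero => intro _; exact ⟨le_refl _, fun _ => hstep⟩
      | succ k ih =>
        intro hk
        obtain ⟨ih1, ih2⟩ := ih (by omega)
        have h1 : Q (mstar + k) ≤ Q (mstar + k + 1) := ih2 (by omega)
        refine ⟨le_trans ih1 h1, fun hlt2 => ?_⟩
        exact part1 (mstar + k) (by omega) (by omega) h1
    have : m = mstar + (m - mstar) := by omega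
    rw [this]
    exact (hup _ (by omega)).1
end
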